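/- arXiv:2402.13544 — 3 statements merged into one kernel-verified Lean document; each statement's English description precedes it below -/
import Mathlib

section
/- Let M be a finitely generated Z-graded module over the polynomial ring k[z] (with deg z = 2) satisfying the hard Lefschetz property, i.e. multiplication by z^n restricts to a k-linear isomorphism M^{-n} → M^{n} for all n ≥ 0. Then for every integer n, the submodule M^{≥n} := ⊕_{k≥n} M^k equals the sum over all pairs (k,l) of natural numbers with k - l = n of Im(z_M^k) ∩ Ker(z_M^{l+1}), where z_M denotes the action of z on M. -/
open Polynomial
open scoped DirectSum

set_option synthInstance.maxHeartbeats 1000000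
set_option maxHeartbeats 1000000

/-- Multiplication by `z = X` on a `k[z]`-module `M`, as a `k[z]`-linear endomorphism. -/
noncomputable def zMul (k M : Type*) [CommRing k] [AddCommGroup M]
    [Module (Polynomial k) M] : M →ₗ[Polynomial k] M where
  toFun m := (X : Polynomial k) • m
  map_add' := smul_add _
  map_smul' c m := by rw [RingHom.id_apply, ← mul_smul, mul_comm, mul_smul]

section Aux

variable {k M : Type*} [Field k] [AddCommGroup M]
    [Module (Polynomial k) M] [Module k M] [IsScalarTower k (Polynomial k) M]

lemma zMul_pow_apply (j : ℕ) (x : M) :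
    ((zMul k M) ^ j) x = ((X : Polynomial k) ^ j) • x := by
  induction j generalizing x with
  | zero => simp
  | succ j ih =>
    rw [pow_succ, Module.End.mul_apply]
    rw [show (zMul k M) x = (X : Polynomial k) • x from rfl, ih, smul_smul, ← pow_succ]

/-- The right-hand side filtration piece. -/
noncomputable def Sfil (k M : Type*) [Field k] [AddCommGroup M]
    [Module (Polynomial k) M] [Module k M] [IsScalarTower k (Polynomial k) M]
    (n : ℤ) : Submodule k M :=
  ⨆ (p : ℕ × ℕ) (_ : (p.1 : ℤ) - (p.2 : ℤ) = n),
    ((LinearMap.range ((zMul k M) ^ p.1)).restrictScalars k ⊓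
      (LinearMap.ker ((zMul k M) ^ (p.2 + 1))).restrictScalars k)

lemma mem_Sfil {n : ℤ} (p : ℕ × ℕ) (hp : (p.1 : ℤ) - (p.2 : ℤ) = n) {x : M}
    (h1 : ∃ y : M, ((X : Polynomial k) ^ p.1) • y = x)
    (h2 : ((X : Polynomial k) ^ (p.2 + 1)) • x = 0) :
    x ∈ Sfil k M n := by
  refine Submodule.mem_iSup_of_mem p (Submodule.mem_iSup_of_mem hp ?_)
  refine Submodule.mem_inf.mpr ⟨?_, ?_⟩
  · rw [Submodule.restrictScalars_mem, LinearMap.mem_range]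
    obtain ⟨y, hy⟩ := h1
    exact ⟨y, by rw [zMul_pow_apply]; exact hy⟩
  · rw [Submodule.restrictScalars_mem, LinearMap.mem_ker, zMul_pow_apply]
    exact h2

lemma mem_prop_iSup {c : Prop} {T : Submodule k M} {y : M}
    (h : y ∈ ⨆ (_ : c), T) : y = 0 ∨ (c ∧ y ∈ T) := by
  by_cases hc : c
  · right; exact ⟨hc, by rwa [iSup_pos hc] at h⟩
  · left; rwa [iSup_neg hc, Submodule.mem_bot] at h

lemma Sfil_smul {n : ℤ} {x : M} (hx : x ∈ Sfil k M n) :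
    (X : Polynomial k) • x ∈ Sfil k M (n + 2) := by
  refine Submodule.iSup_induction
    (motive := fun x => (X : Polynomial k) • x ∈ Sfil k M (n + 2)) _ hx ?_ (by simp)
    (fun a b ha hb => by
      show (X : Polynomial k) • (a + b) ∈ Sfil k M (n + 2)
      rw [smul_add]; exact add_mem ha hb)
  intro p y hy
  show (X : Polynomial k) • y ∈ Sfil k M (n + 2)
  rcases mem_prop_iSup hy with rfl | ⟨hp, hy⟩
  · simp
  rw [Submodule.mem_inf, Submodule.restrictScalars_mem, Submodule.restrictScalars_mem,
    LinearMap.mem_range, LinearMap.mem_ker] at hy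
  obtain ⟨⟨w, hw⟩, hker⟩ := hy
  rw [zMul_pow_apply] at hw hker
  rcases p with ⟨a, b⟩
  dsimp only at hp hw hker
  rcases b with _ | l
  · -- ker z^1 : X • y = 0
    have h0 : (X : Polynomial k) • y = 0 := by
      have := hker; rwa [zero_add, pow_one] at this
    rw [h0]; simp
  · refine mem_Sfil (a + 1, l) ?_ ⟨w, ?_⟩ ?_
    · dsimp only; push_cast at hp ⊢; omega
    · dsimp only; rw [pow_succ', mul_smul, hw]
    · dsimp only; rw [smul_smul, ← pow_succ]; exact hker

lemma Sfil_pow_smul {n : ℤ} (j : ℕ) {x : M} (hx : x ∈ Sfil k M n) :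
    ((X : Polynomial k) ^ j) • x ∈ Sfil k M (n + 2 * j) := by
  induction j with
  | zero => simpa using hx
  | succ j ih =>
    have h1 : ((X : Polynomial k) ^ (j + 1)) • x
        = (X : Polynomial k) • (((X : Polynomial k) ^ j) • x) := by
      rw [pow_succ', mul_smul]
    rw [h1]
    have := Sfil_smul ih
    have e2 : n + 2 * (j : ℤ) + 2 = n + 2 * ((j + 1 : ℕ) : ℤ) := by push_cast; ring
    rwa [e2] at this

variable (A : ℤ → Submodule k M)

lemma pow_smul_memA (hdeg : ∀ (n : ℤ), ∀ x ∈ A n, (X : Polynomial k) • x ∈ A (n + 2))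
    (j : ℕ) {m : ℤ} {x : M} (hx : x ∈ A m) :
    ((X : Polynomial k) ^ j) • x ∈ A (m + 2 * j) := by
  induction j with
  | zero => simpa using hx
  | succ j ih =>
    have h1 : ((X : Polynomial k) ^ (j + 1)) • x
        = (X : Polynomial k) • (((X : Polynomial k) ^ j) • x) := by
      rw [pow_succ', mul_smul]
    rw [h1]
    have := hdeg _ _ ih
    have e2 : m + 2 * (j : ℤ) + 2 = m + 2 * ((j + 1 : ℕ) : ℤ) := by push_cast; ring
    rwa [e2] at this

lemma HL_inj
    (hHL : ∀ n : ℕ, Set.BijOn (fun x => ((X : Polynomial k) ^ n) • x)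
      (A (-(n : ℤ)) : Set M) (A (n : ℤ)))
    {d j : ℕ} (hjd : j ≤ d) {y : M} (hy : y ∈ A (-(d : ℤ)))
    (h : ((X : Polynomial k) ^ j) • y = 0) : y = 0 := by
  have h2 : ((X : Polynomial k) ^ d) • y = 0 := by
    have hd : (X : Polynomial k) ^ d = X ^ (d - j) * X ^ j := by
      rw [← pow_add]; congr 1; omega
    rw [hd, mul_smul, h, smul_zero]
  have h0 : (0 : M) ∈ (A (-(d : ℤ)) : Set M) := Submodule.zero_mem _
  exact (hHL d).injOn hy h0 (by simpa using h2)

lemma exists_boundA [Module.Finite (Polynomial k) M]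
    (hinternal : DirectSum.IsInternal A)
    (hdeg : ∀ (n : ℤ), ∀ x ∈ A n, (X : Polynomial k) • x ∈ A (n + 2)) :
    ∃ N : ℕ, ∀ m : ℤ, m < -(N : ℤ) → A m = ⊥ := by
  classical
  set B : ℕ → Submodule k M := fun N => ⨆ (m : ℤ) (_ : -(N : ℤ) ≤ m), A m with hB
  have hBmono : Monotone B := by
    intro N N' h
    refine iSup_le fun m => iSup_le fun hm => ?_
    exact le_iSup_of_le m (le_iSup_of_le (by omega) le_rfl)
  have hAB : ∀ (N : ℕ) (m : ℤ), -(N : ℤ) ≤ m → A m ≤ B N := fun N m hm =>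
    le_iSup_of_le m (le_iSup_of_le hm le_rfl)
  have hmem : ∀ x : M, ∃ N, x ∈ B N := by
    intro x
    have hx : x ∈ ⨆ m, A m := by rw [hinternal.submodule_iSup_eq_top]; trivial
    have hx2 : x ∈ ⨆ N, B N := by
      refine Submodule.iSup_induction (motive := fun x => x ∈ ⨆ N, B N) _ hx
        (fun m y hy => ?_) (Submodule.zero_mem _)
        (fun a b ha hb => Submodule.add_mem _ ha hb)
      show y ∈ ⨆ N, B N
      exact Submodule.mem_iSup_of_mem m.natAbs (hAB _ m (by omega) hy)
    rwa [Submodule.mem_iSup_of_directed _ hBmono.directed_le] at hx2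
  choose Nf hNf using hmem
  obtain ⟨s, hs⟩ := Module.Finite.fg_top (R := Polynomial k) (M := M)
  set N := s.sup Nf with hNdef
  have hzB : ∀ x ∈ B N, (X : Polynomial k) • x ∈ B N := by
    intro x hx
    refine Submodule.iSup_induction (motive := fun x => (X : Polynomial k) • x ∈ B N) _ hx
      (fun m y hy => ?_) (by simp)
      (fun a b ha hb => by
        show (X : Polynomial k) • (a + b) ∈ B N
        rw [smul_add]; exact add_mem ha hb)
    show (X : Polynomial k) • y ∈ B N
    rcases mem_prop_iSup hy with rfl | ⟨hm, hy⟩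
    · simp
    · exact hAB N (m + 2) (by omega) (hdeg m y hy)
  have hpolyB : ∀ (p : Polynomial k), ∀ x ∈ B N, p • x ∈ B N := by
    intro p
    induction p using Polynomial.induction_on' with
    | add p q hp hq => intro x hx; rw [add_smul]; exact add_mem (hp x hx) (hq x hx)
    | monomial i a =>
      intro x hx
      rw [← C_mul_X_pow_eq_monomial, mul_smul]
      have h2 : ∀ i : ℕ, ((X : Polynomial k) ^ i) • x ∈ B N := by
        intro i; induction i with
        | zero => simpa using hx
        | succ i ih => rw [pow_succ', mul_smul]; exact hzB _ ih
      rw [← Polynomial.algebraMap_eq, algebraMap_smul]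
      exact Submodule.smul_mem _ a (h2 i)
  have hBtop : B N = ⊤ := by
    rw [eq_top_iff]
    intro x _
    have hx : x ∈ Submodule.span (Polynomial k) (s : Set M) := by rw [hs]; trivial
    refine Submodule.span_induction (p := fun x _ => x ∈ B N) ?_ (Submodule.zero_mem _)
      (fun a b _ _ ha hb => Submodule.add_mem _ ha hb)
      (fun c y _ hy => hpolyB c y hy) hx
    intro g hg
    exact hBmono (Finset.le_sup hg) (hNf g)
  refine ⟨N, fun m hm => ?_⟩
  have hind := hinternal.submodule_iSupIndep
  rw [eq_bot_iff]
  intro x hx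
  have hx2 : x ∈ B N := by rw [hBtop]; trivial
  have hle : B N ≤ ⨆ (m' : ℤ) (_ : m' ≠ m), A m' := by
    refine iSup_le fun m' => iSup_le fun hm' => ?_
    exact le_iSup_of_le m' (le_iSup_of_le (by omega) le_rfl)
  exact (hind m).le_bot ⟨hx, hle hx2⟩

end Aux

/-- Let `M` be a finitely generated `ℤ`-graded module over `k[z]`
(with `deg z = 2`, so that `z` raises degrees by `2`) satisfying the hard Lefschetz
property.  Then for every `n : ℤ`, the submodule `M^{≥ n} = ⨆_{m ≥ n} M^m` equals the
sum over pairs `(k, l)` of natural numbers with `k - l = n` of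
`Im(z^k) ∩ Ker(z^{l+1})`. -/
theorem hard_lefschetz_filtration
    (k M : Type*) [Field k] [AddCommGroup M]
    [Module (Polynomial k) M] [Module k M] [IsScalarTower k (Polynomial k) M]
    [Module.Finite (Polynomial k) M]
    (A : ℤ → Submodule k M)
    (hinternal : DirectSum.IsInternal A)
    (hdeg : ∀ (n : ℤ), ∀ x ∈ A n, (X : Polynomial k) • x ∈ A (n + 2))
    (hHL : ∀ n : ℕ, Set.BijOn (fun x => ((X : Polynomial k) ^ n) • x)
      (A (-(n : ℤ)) : Set M) (A (n : ℤ)))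
    (n : ℤ) :
    (⨆ (m : ℤ) (_ : n ≤ m), A m) =
      ⨆ (p : ℕ × ℕ) (_ : (p.1 : ℤ) - (p.2 : ℤ) = n),
        ((LinearMap.range ((zMul k M) ^ p.1)).restrictScalars k ⊓
          (LinearMap.ker ((zMul k M) ^ (p.2 + 1))).restrictScalars k) := by
  classical
  -- the equivalence with the direct sum, and graded projections
  set e : (⨁ m, A m) ≃ₗ[k] M :=
    LinearEquiv.ofBijective (DirectSum.coeLinearMap A) hinternal with he
  have he_of : ∀ (m : ℤ) (v : A m), e (DirectSum.of (fun m => A m) m v) = (v : M) := by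
    intro m v
    rw [he]; exact DirectSum.coeLinearMap_of ..
  have hsymm_of : ∀ (m : ℤ) (x : M) (hx : x ∈ A m),
      e.symm x = DirectSum.of (fun m => A m) m ⟨x, hx⟩ := by
    intro m x hx
    rw [LinearEquiv.symm_apply_eq, he_of]
  have proj_sum : ∀ x : M, x = ∑ m ∈ (e.symm x).support, ((e.symm x) m : M) := by
    intro x
    have h1 := congrArg e (DirectSum.sum_support_of (e.symm x))
    rw [e.apply_symm_apply] at h1
    rw [map_sum] at h1
    conv_lhs => rw [← h1]
    refine Finset.sum_congr rfl fun m _ => ?_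
    rw [he_of]
  -- projection commutes with multiplication by X
  have proj_smul : ∀ (x : M) (m : ℤ),
      ((e.symm ((X : Polynomial k) • x)) (m + 2) : M)
        = (X : Polynomial k) • ((e.symm x) m : M) := by
    intro x
    have hx : x ∈ ⨆ m, A m := by rw [hinternal.submodule_iSup_eq_top]; trivial
    refine Submodule.iSup_induction
      (motive := fun x => ∀ m : ℤ, ((e.symm ((X : Polynomial k) • x)) (m + 2) : M)
        = (X : Polynomial k) • ((e.symm x) m : M)) _ hx ?_ (by simp) ?_
    · intro m' y hy
      show ∀ m : ℤ, ((e.symm ((X : Polynomial k) • y)) (m + 2) : M)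
        = (X : Polynomial k) • ((e.symm y) m : M)
      intro m
      rw [hsymm_of m' y hy, hsymm_of (m' + 2) ((X : Polynomial k) • y) (hdeg m' y hy)]
      by_cases hmm : m = m'
      · subst hmm
        rw [DirectSum.of_eq_same, DirectSum.of_eq_same]
      · rw [DirectSum.of_eq_of_ne _ _ _ (by omega), DirectSum.of_eq_of_ne _ _ _ hmm]
        simp
    · intro a b ha hb
      show ∀ m : ℤ, ((e.symm ((X : Polynomial k) • (a + b))) (m + 2) : M)
        = (X : Polynomial k) • ((e.symm (a + b)) m : M)
      intro m
      rw [smul_add, map_add, DirectSum.add_apply, Submodule.coe_add, ha m, hb m,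
        map_add, DirectSum.add_apply, Submodule.coe_add, smul_add]
  have proj_pow_smul : ∀ (j : ℕ) (x : M) (m : ℤ),
      ((e.symm (((X : Polynomial k) ^ j) • x)) (m + 2 * j) : M)
        = ((X : Polynomial k) ^ j) • ((e.symm x) m : M) := by
    intro j
    induction j with
    | zero =>
      intro x m
      rw [pow_zero, show m + 2 * ((0 : ℕ) : ℤ) = m by push_cast; ring, one_smul, one_smul]
    | succ j ih =>
      intro x m
      have h1 : ((X : Polynomial k) ^ (j + 1)) • x
          = (X : Polynomial k) • (((X : Polynomial k) ^ j) • x) := by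
        rw [pow_succ', mul_smul]
      have e2 : m + 2 * ((j + 1 : ℕ) : ℤ) = (m + 2 * j) + 2 := by push_cast; ring
      rw [h1, e2, proj_smul, ih, smul_smul, ← pow_succ']
  -- obtain the vanishing bound
  obtain ⟨N, hN⟩ := exists_boundA A hinternal hdeg
  -- the descent lemma
  have L : ∀ t d : ℕ, N < d + 2 * t → ∀ n' : ℤ, n' ≤ -(d : ℤ) →
      (A (-(d : ℤ)) : Submodule k M) ≤ Sfil k M n' := by
    intro t
    induction t with
    | zero => intro d hd n' _; rw [hN _ (by omega)]; exact bot_le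
    | succ t ih =>
      intro d hd n' hn' x hx
      have hx2 : ((X : Polynomial k) ^ (d + 1)) • x ∈ A (((d + 2 : ℕ) : ℤ)) := by
        have := pow_smul_memA A hdeg (d + 1) hx
        rwa [show -(d : ℤ) + 2 * ((d + 1 : ℕ) : ℤ) = ((d + 2 : ℕ) : ℤ) by push_cast; ring] at this
      obtain ⟨y, hyA, hyEq0⟩ := (hHL (d + 2)).surjOn hx2
      have hyEq : ((X : Polynomial k) ^ (d + 2)) • y = ((X : Polynomial k) ^ (d + 1)) • x := hyEq0
      have hXy : (X : Polynomial k) • y ∈ A (-(d : ℤ)) := by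
        have := hdeg _ _ hyA
        rwa [show -((d + 2 : ℕ) : ℤ) + 2 = -(d : ℤ) by push_cast; ring] at this
      have hpker : ((X : Polynomial k) ^ (d + 1)) • (x - (X : Polynomial k) • y) = 0 := by
        rw [smul_sub, smul_smul, ← pow_succ, show d + 1 + 1 = d + 2 by omega, hyEq, sub_self]
      have hpS : x - (X : Polynomial k) • y ∈ Sfil k M n' := by
        refine mem_Sfil (0, (-n').toNat) (by simp; omega) ⟨x - (X : Polynomial k) • y, by simp⟩ ?_
        obtain ⟨c, hc⟩ : ∃ c, (-n').toNat + 1 = c + (d + 1) := ⟨(-n').toNat - d, by omega⟩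
        rw [hc, pow_add, mul_smul, hpker, smul_zero]
      have hyS : y ∈ Sfil k M (n' - 2) := ih (d + 2) (by omega) (n' - 2) (by push_cast; omega) hyA
      have hXyS := Sfil_smul hyS
      rw [show n' - 2 + 2 = n' by ring] at hXyS
      have := add_mem hpS hXyS
      rwa [sub_add_cancel] at this
  apply le_antisymm
  · -- LHS ≤ RHS
    refine iSup_le fun m => iSup_le fun hm => ?_
    show A m ≤ Sfil k M n
    rcases le_or_gt m 0 with hm0 | hm0
    · have h1 := L (N + 1) (-m).toNat (by omega) n (by omega)
      rwa [show -(((-m).toNat : ℕ) : ℤ) = m by omega] at h1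
    · intro x hx
      have hx' : x ∈ (A (((m.toNat : ℕ) : ℤ)) : Set M) := by
        rwa [show (((m.toNat : ℕ)) : ℤ) = m by omega]
      obtain ⟨y, hyA, hyEq0⟩ := (hHL m.toNat).surjOn hx'
      have hyEq : ((X : Polynomial k) ^ m.toNat) • y = x := hyEq0
      have hyS : y ∈ Sfil k M (n - 2 * (m.toNat : ℤ)) :=
        L (N + 1) m.toNat (by omega) _ (by omega) hyA
      have := Sfil_pow_smul m.toNat hyS
      rwa [show n - 2 * ((m.toNat : ℕ) : ℤ) + 2 * ((m.toNat : ℕ) : ℤ) = n by ring, hyEq] at this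
  · -- RHS ≤ LHS
    refine iSup_le fun p => iSup_le fun hp => ?_
    intro x hx
    rw [Submodule.mem_inf, Submodule.restrictScalars_mem, Submodule.restrictScalars_mem,
      LinearMap.mem_range, LinearMap.mem_ker] at hx
    obtain ⟨⟨y, hy⟩, hker⟩ := hx
    rw [zMul_pow_apply] at hy hker
    -- decompose x into homogeneous components
    rw [proj_sum x]
    refine Submodule.sum_mem _ fun m _ => ?_
    by_cases hmn : n ≤ m
    · exact Submodule.mem_iSup_of_mem m (Submodule.mem_iSup_of_mem hmn (SetLike.coe_mem _))
    · -- components in degree < n vanish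
      push_neg at hmn
      have hc : ((e.symm x) m : M) = ((X : Polynomial k) ^ p.1) • ((e.symm y) (m - 2 * p.1) : M) := by
        have := proj_pow_smul p.1 y (m - 2 * p.1)
        rw [hy, show m - 2 * (p.1 : ℤ) + 2 * (p.1 : ℤ) = m by ring] at this
        exact this
      have hkerc : ((X : Polynomial k) ^ (p.1 + p.2 + 1)) • ((e.symm y) (m - 2 * p.1) : M) = 0 := by
        have h2 := proj_pow_smul (p.2 + 1) x m
        rw [hker] at h2
        have h3 : ((X : Polynomial k) ^ (p.2 + 1)) • ((e.symm x) m : M) = 0 := by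
          rw [← h2]; simp
        rw [hc, smul_smul, ← pow_add] at h3
        rwa [show p.1 + p.2 + 1 = p.2 + 1 + p.1 by omega]
      set d : ℕ := (2 * (p.1 : ℤ) - m).toNat with hd
      have hdm : m - 2 * (p.1 : ℤ) = -(d : ℤ) := by omega
      have hyA' : ((e.symm y) (m - 2 * p.1) : M) ∈ A (-(d : ℤ)) := by
        rw [← hdm]; exact SetLike.coe_mem _
      have hzero : ((e.symm y) (m - 2 * p.1) : M) = 0 :=
        HL_inj A hHL (d := d) (j := p.1 + p.2 + 1) (by omega) hyA' hkerc
      rw [hc, hzero, smul_zero]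
      exact Submodule.zero_mem _
end

section
/- Suppose 0 → M^! → M^* → N⟨1⟩ → 0 is a short exact sequence of Z-graded k[z]-modules (deg z = 2) such that: (i) M^! and M^* are free of finite rank over k[z]; (ii) writing M̄^! = M^!/zM^! and M̄^* = M^*/zM^*, one has (M̄^!)^{-n} = 0 and (M̄^*)^{n} = 0 for all n > 0; (iii) N satisfies the hard Lefschetz property. Then the graded k[z]-module L := M^*/zM^! (where M^! is viewed as a submodule of M^* via the given injection) satisfies the hard Lefschetz property. -/
open Polynomial

/-- If `φ` is a graded linear map shifting degrees by an injective function `d`, then any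
homogeneous element of the image has a homogeneous preimage of the right degree. -/
theorem graded_fiber {k M M' : Type*} [Field k] [AddCommGroup M] [AddCommGroup M']
    [Module k M] [Module k M'] {A : ℤ → Submodule k M} {A' : ℤ → Submodule k M'}
    (hA : DirectSum.IsInternal A) (hA' : DirectSum.IsInternal A')
    (φ : M →ₗ[k] M') (d : ℤ → ℤ) (hd : Function.Injective d)
    (hφ : ∀ i, ∀ x ∈ A i, φ x ∈ A' (d i))
    (i : ℤ) (x : M') (hx : x ∈ A' (d i)) (y : M) (hy : φ y = x) :
    ∃ y' ∈ A i, φ y' = x := by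
  classical
  set e := LinearEquiv.ofBijective (DirectSum.coeLinearMap A) hA with he
  set π : M' →ₗ[k] A' (d i) :=
    (DirectSum.component k ℤ (fun t => A' t) (d i)).comp
      (LinearEquiv.ofBijective (DirectSum.coeLinearMap A') hA').symm.toLinearMap with hπ
  have key : π.comp (φ.comp (DirectSum.coeLinearMap A))
      = (φ.restrict (hφ i)).comp (DirectSum.component k ℤ (fun t => A t) i) := by
    apply DirectSum.linearMap_ext
    intro j
    ext u
    have hcoe : DirectSum.coeLinearMap A (DirectSum.lof k ℤ (fun t => A t) j u) = (u : M) := by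
      rw [DirectSum.lof_eq_of, DirectSum.coeLinearMap_of]
    rcases eq_or_ne j i with rfl | hne
    · simp only [LinearMap.comp_apply, hcoe]
      have h1 : π (φ u) = ⟨φ u, hφ j u u.2⟩ :=
        hA'.ofBijective_coeLinearMap_of_mem (hφ j u u.2)
      rw [h1]
      have h2 : DirectSum.component k ℤ (fun t => A t) j
          (DirectSum.lof k ℤ (fun t => A t) j u) = u := by
        simp [DirectSum.component.lof_self]
      rw [h2]
      simp [LinearMap.restrict_apply]
    · simp only [LinearMap.comp_apply, hcoe]
      have h1 : π (φ u) = 0 :=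
        hA'.ofBijective_coeLinearMap_of_mem_ne (fun h => hne (hd h)) (hφ j u u.2)
      rw [h1]
      have h2 : DirectSum.component k ℤ (fun t => A t) i
          (DirectSum.lof k ℤ (fun t => A t) j u) = 0 := by
        rw [DirectSum.component.of]
        exact dif_neg hne
      rw [h2, map_zero]
  set c := e.symm y with hcdef
  have hc : DirectSum.coeLinearMap A c = y := e.apply_symm_apply y
  have h2 := LinearMap.congr_fun key c
  simp only [LinearMap.comp_apply] at h2
  rw [hc, hy] at h2
  have h1 : π x = ⟨x, hx⟩ := hA'.ofBijective_coeLinearMap_of_mem hx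
  rw [h1] at h2
  refine ⟨(c i : M), (c i).2, ?_⟩
  have h3 := congrArg Subtype.val h2
  simp only [LinearMap.restrict_apply] at h3
  exact h3.symm

/-- Given a short exact sequence `0 → M¹ → M² → N⟨1⟩ → 0` of
`ℤ`-graded `k[z]`-modules (`deg z = 2`) such that (i) `M¹` and `M²` are free of finite
rank over `k[z]`, (ii) `(M̄¹)^{-n} = 0` and `(M̄²)^{n} = 0` for all `n > 0` (where
`M̄ = M/zM`), and (iii) `N` satisfies the hard Lefschetz property, the graded module
`L := M²/zM¹` (with `M¹` viewed as a submodule of `M²` via the injection `f`) satisfies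
the hard Lefschetz property.  The grading of `L` in degree `n` is the image of `(M²)^n`
under the quotient map. -/
theorem ses_hard_lefschetz
    (k M₁ M₂ N : Type*) [Field k]
    [AddCommGroup M₁] [AddCommGroup M₂] [AddCommGroup N]
    [Module (Polynomial k) M₁] [Module (Polynomial k) M₂] [Module (Polynomial k) N]
    [Module k M₁] [Module k M₂] [Module k N]
    [IsScalarTower k (Polynomial k) M₁] [IsScalarTower k (Polynomial k) M₂]
    [IsScalarTower k (Polynomial k) N]
    (A₁ : ℤ → Submodule k M₁) (A₂ : ℤ → Submodule k M₂) (B : ℤ → Submodule k N)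
    (hint₁ : DirectSum.IsInternal A₁) (hint₂ : DirectSum.IsInternal A₂)
    (hintB : DirectSum.IsInternal B)
    (hdeg₁ : ∀ (n : ℤ), ∀ x ∈ A₁ n, (X : Polynomial k) • x ∈ A₁ (n + 2))
    (hdeg₂ : ∀ (n : ℤ), ∀ x ∈ A₂ n, (X : Polynomial k) • x ∈ A₂ (n + 2))
    (hdegB : ∀ (n : ℤ), ∀ x ∈ B n, (X : Polynomial k) • x ∈ B (n + 2))
    (f : M₁ →ₗ[Polynomial k] M₂) (g : M₂ →ₗ[Polynomial k] N)
    (hfgr : ∀ (n : ℤ), ∀ x ∈ A₁ n, f x ∈ A₂ n)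
    -- `g : M² → N⟨1⟩` is graded of degree `0`, i.e. it shifts degrees by `1` in `N`
    (hggr : ∀ (n : ℤ), ∀ x ∈ A₂ n, g x ∈ B (n + 1))
    (hfinj : Function.Injective f) (hgsurj : Function.Surjective g)
    (hexact : LinearMap.range f = LinearMap.ker g)
    -- (i) freeness and finiteness
    [Module.Free (Polynomial k) M₁] [Module.Finite (Polynomial k) M₁]
    [Module.Free (Polynomial k) M₂] [Module.Finite (Polynomial k) M₂]
    -- (ii) vanishing of graded pieces of the reductions mod `z`
    (hvan₁ : ∀ n : ℤ, 0 < n → ∀ x ∈ A₁ (-n), ∃ y : M₁, x = (X : Polynomial k) • y)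
    (hvan₂ : ∀ n : ℤ, 0 < n → ∀ x ∈ A₂ n, ∃ y : M₂, x = (X : Polynomial k) • y)
    -- (iii) hard Lefschetz for `N`
    (hHLN : ∀ n : ℕ, Set.BijOn (fun x => ((X : Polynomial k) ^ n) • x)
      (B (-(n : ℤ)) : Set N) (B (n : ℤ))) :
    -- conclusion: `L = M² / z·f(M¹)` satisfies the hard Lefschetz property
    ∀ n : ℕ, Set.BijOn
      (fun x : M₂ ⧸ Submodule.map (zMul k M₂) (LinearMap.range f) =>
        ((X : Polynomial k) ^ n) • x)
      ((Submodule.map (zMul k M₂) (LinearMap.range f)).mkQ '' (A₂ (-(n : ℤ)) : Set M₂))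
      ((Submodule.map (zMul k M₂) (LinearMap.range f)).mkQ '' (A₂ (n : ℤ) : Set M₂)) := by
  classical
  intro n
  set Z : Submodule (Polynomial k) M₂ := Submodule.map (zMul k M₂) (LinearMap.range f) with hZdef
  have hXinj : Function.Injective (fun m : M₂ => (X : Polynomial k) • m) :=
    smul_right_injective M₂ X_ne_zero
  -- graded surjectivity of `g`
  have hgsurj' : ∀ (m : ℤ) (b : N), b ∈ B (m + 1) → ∃ u ∈ A₂ m, g u = b := by
    intro m b hb
    obtain ⟨y, hy⟩ := hgsurj b
    exact graded_fiber hint₂ hintB (g.restrictScalars k) (fun t => t + 1)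
      (fun a b h => by simp only at h; omega) (fun i x hx => hggr i x hx) m b hb y hy
  -- homogeneous elements of the range of `f` have homogeneous preimages
  have hrangef : ∀ (m : ℤ) (c : M₂), c ∈ A₂ m → c ∈ LinearMap.range f →
      ∃ w ∈ A₁ m, f w = c := by
    intro m c hc hcr
    obtain ⟨y, hy⟩ := hcr
    exact graded_fiber hint₁ hint₂ (f.restrictScalars k) (fun t => t)
      (fun a b h => h) (fun i x hx => hfgr i x hx) m c hc y hy
  -- graded version of `hvan₂`
  have hvan₂' : ∀ (m : ℤ) (c : M₂), c ∈ A₂ m → 0 < m →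
      ∃ y' ∈ A₂ (m - 2), (X : Polynomial k) • y' = c := by
    intro m c hc hm
    obtain ⟨y, hy⟩ := hvan₂ m hm c hc
    have hc' : c ∈ A₂ (m - 2 + 2) := by rwa [sub_add_cancel]
    exact graded_fiber hint₂ hint₂ ((zMul k M₂).restrictScalars k) (fun t => t + 2)
      (fun a b h => by simp only at h; omega) (fun i x hx => hdeg₂ i x hx) (m - 2) c hc' y hy.symm
  -- iterated degree shift
  have hpow : ∀ (j : ℕ) (m : ℤ) (x : M₂), x ∈ A₂ m →
      (X : Polynomial k) ^ j • x ∈ A₂ (m + 2 * (j : ℤ)) := by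
    intro j
    induction j with
    | zero => intro m x hx; simpa using hx
    | succ t ih =>
      intro m x hx
      have h1 := hdeg₂ _ _ (ih m x hx)
      have h3 : (X : Polynomial k) ^ (t + 1) • x = (X : Polynomial k) • ((X : Polynomial k) ^ t • x) := by
        rw [pow_succ, mul_comm, mul_smul]
      rw [h3]
      convert h1 using 2
      push_cast
      ring
  rcases n with _ | m
  · simp only [Nat.cast_zero, neg_zero, pow_zero, one_smul]
    exact Set.bijOn_id _
  · have hpos : (0 : ℤ) < ((m + 1 : ℕ) : ℤ) := by exact_mod_cast Nat.succ_pos m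
    refine ⟨?_, ?_, ?_⟩
    · -- MapsTo
      rintro p ⟨a, ha, rfl⟩
      refine ⟨(X : Polynomial k) ^ (m + 1) • a, ?_, ?_⟩
      · have h := hpow (m + 1) _ a ha
        have hcast : (-((m + 1 : ℕ) : ℤ) + 2 * ((m + 1 : ℕ) : ℤ)) = ((m + 1 : ℕ) : ℤ) := by
          ring
        rwa [hcast] at h
      · exact map_smul (Submodule.mkQ Z) _ a
    · -- InjOn
      rintro p ⟨a, ha, rfl⟩ q ⟨b, hb, rfl⟩ hpq
      simp only at hpq
      rw [← map_smul, ← map_smul] at hpq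
      rw [Submodule.mkQ_apply, Submodule.mkQ_apply, Submodule.Quotient.eq, ← smul_sub] at hpq
      obtain ⟨w, hwr, hw⟩ := hpq
      obtain ⟨v, rfl⟩ := hwr
      have hw' : (X : Polynomial k) • f v
          = (X : Polynomial k) • ((X : Polynomial k) ^ m • (a - b)) := by
        have hsplit : (X : Polynomial k) ^ (m + 1) • (a - b)
            = (X : Polynomial k) • ((X : Polynomial k) ^ m • (a - b)) := by
          rw [pow_succ, mul_comm, mul_smul]
        rw [← hsplit]
        exact hw
      have hfv : (X : Polynomial k) ^ m • (a - b) = f v := (hXinj hw').symm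
      have hc : a - b ∈ A₂ (-((m + 1 : ℕ) : ℤ)) := sub_mem ha hb
      have hgc : g (a - b) ∈ B (-(m : ℤ)) := by
        have h := hggr _ _ hc
        have hcast : (-((m + 1 : ℕ) : ℤ) + 1) = -(m : ℤ) := by push_cast; ring
        rwa [hcast] at h
      have hgczero : (X : Polynomial k) ^ m • g (a - b) = 0 := by
        rw [← map_smul, hfv]
        have hk : f v ∈ LinearMap.ker g := hexact ▸ LinearMap.mem_range_self f v
        exact LinearMap.mem_ker.mp hk
      have hgc0 : g (a - b) = 0 := (hHLN m).2.1 hgc (zero_mem _) (by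
        show (X : Polynomial k) ^ m • g (a - b) = (X : Polynomial k) ^ m • (0 : N)
        rw [hgczero, smul_zero])
      have hcr : a - b ∈ LinearMap.range f := by
        rw [hexact]
        exact LinearMap.mem_ker.mpr hgc0
      obtain ⟨w, hw1, hw2⟩ := hrangef _ (a - b) hc hcr
      obtain ⟨y, hy⟩ := hvan₁ ((m + 1 : ℕ) : ℤ) hpos w hw1
      have hmemZ : a - b ∈ Z := by
        refine ⟨f y, LinearMap.mem_range_self f y, ?_⟩
        show (X : Polynomial k) • f y = a - b
        rw [← map_smul, ← hy, hw2]
      show Submodule.mkQ Z a = Submodule.mkQ Z b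
      rw [Submodule.mkQ_apply, Submodule.mkQ_apply]
      exact (Submodule.Quotient.eq Z).mpr hmemZ
    · -- SurjOn
      rintro p ⟨a, ha, rfl⟩
      obtain ⟨y, hy1, hy2⟩ := hvan₂' _ a ha hpos
      have hgy : g y ∈ B (m : ℤ) := by
        have h := hggr _ _ hy1
        have hcast : (((m + 1 : ℕ) : ℤ) - 2 + 1) = (m : ℤ) := by push_cast; ring
        rwa [hcast] at h
      obtain ⟨b, hb, hbe⟩ := (hHLN m).2.2 hgy
      simp only at hbe
      have hb' : b ∈ B (-((m + 1 : ℕ) : ℤ) + 1) := by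
        have hcast : (-((m + 1 : ℕ) : ℤ) + 1) = -(m : ℤ) := by push_cast; ring
        rwa [hcast]
      obtain ⟨u, hu, hgu⟩ := hgsurj' (-((m + 1 : ℕ) : ℤ)) b hb'
      have hker : y - (X : Polynomial k) ^ m • u ∈ LinearMap.ker g := by
        rw [LinearMap.mem_ker, map_sub, map_smul, hgu, hbe, sub_self]
      have hranged : y - (X : Polynomial k) ^ m • u ∈ LinearMap.range f := by
        rw [hexact]; exact hker
      obtain ⟨v, hv⟩ := hranged
      refine ⟨Submodule.mkQ Z u, ⟨u, hu, rfl⟩, ?_⟩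
      show (X : Polynomial k) ^ (m + 1) • Submodule.mkQ Z u = Submodule.mkQ Z a
      rw [← map_smul, Submodule.mkQ_apply, Submodule.mkQ_apply, Submodule.Quotient.eq]
      refine ⟨f (-v), LinearMap.mem_range_self f (-v), ?_⟩
      show (X : Polynomial k) • f (-v) = (X : Polynomial k) ^ (m + 1) • u - a
      rw [map_neg, smul_neg]
      have hkey : (X : Polynomial k) • f v = a - (X : Polynomial k) ^ (m + 1) • u := by
        rw [hv, smul_sub, hy2, ← mul_smul, ← pow_succ']
      rw [hkey, neg_sub]
end

section
/- Let H_β be the symmetric quiver Hecke algebra and M, N simple modules over the completion Ĥ with at least one of them real (i.e. M⋆M or N⋆N simple). For a(z) ≠ b(z) in zO (O = k[[z]]), the endomorphism ring of the deformed convolution product satisfies End_{Ĥ_O}(M_{a(z)} ⋆_O N_{b(z)}) = O·id, where M_{a(z)} is the affinization of M with x_k acting as x_k ⊗ 1 + 1 ⊗ a(z). -/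
open PowerSeries

/-- One division step: a `B`-linear endomorphism `g` of `T` can be written as
`C c • id + X • h` for some scalar `c : k` and `B`-linear `h`. -/
theorem aux_step_divide
    (k : Type) [Field k]
    (B : Type) [Ring B] [Algebra (PowerSeries k) B]
    (T : Type) [AddCommGroup T] [Module B T]
    [Module (PowerSeries k) T] [IsScalarTower (PowerSeries k) B T]
    (hinj : ∀ y y' : T, (PowerSeries.X : PowerSeries k) • y
        = (PowerSeries.X : PowerSeries k) • y' → y = y')
    (ST : Submodule B T)
    (hST : ∀ x : T, x ∈ ST ↔ ∃ y : T, x = (PowerSeries.X : PowerSeries k) • y)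
    (hEnd0 : ∀ g : (T ⧸ ST) →ₗ[B] (T ⧸ ST), ∃ c : k,
      ∀ x : T, g (Submodule.Quotient.mk x)
        = Submodule.Quotient.mk ((PowerSeries.C c) • x))
    (g : T →ₗ[B] T) :
    ∃ c : k, ∃ h : T →ₗ[B] T, ∀ x : T,
      g x = (PowerSeries.C c) • x + (PowerSeries.X : PowerSeries k) • h x := by
  -- g maps ST into ST
  have hmap : ST ≤ ST.comap g := by
    intro x hx
    obtain ⟨y, hy⟩ := (hST x).mp hx
    have h1 : g x = (PowerSeries.X : PowerSeries k) • g y := by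
      rw [hy]; exact g.map_smul_of_tower _ _
    exact Submodule.mem_comap.mpr ((hST _).mpr ⟨g y, h1⟩)
  obtain ⟨c, hc⟩ := hEnd0 (ST.mapQ ST g hmap)
  have key : ∀ x : T, ∃ y : T, g x - (PowerSeries.C c) • x
      = (PowerSeries.X : PowerSeries k) • y := by
    intro x
    have h1 : Submodule.Quotient.mk (p := ST) (g x)
        = Submodule.Quotient.mk ((PowerSeries.C c) • x) := by
      have := hc x
      rwa [Submodule.mapQ_apply] at this
    have h2 : g x - (PowerSeries.C c) • x ∈ ST :=
      (Submodule.Quotient.eq ST).mp h1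
    exact (hST _).mp h2
  choose h0 hh0 using key
  have hadd : ∀ x x' : T, h0 (x + x') = h0 x + h0 x' := by
    intro x x'
    apply hinj
    rw [smul_add, ← hh0, ← hh0, ← hh0, map_add, smul_add]
    abel
  have hsmul : ∀ (b : B) (x : T), h0 (b • x) = b • h0 x := by
    intro b x
    apply hinj
    rw [← hh0, map_smul, smul_comm (PowerSeries.X : PowerSeries k) b (h0 x),
      ← hh0, smul_sub, smul_comm]
  refine ⟨c, ⟨⟨h0, hadd⟩, hsmul⟩, fun x => ?_⟩
  have := hh0 x
  simp only [LinearMap.coe_mk, AddHom.coe_mk]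
  rw [← this]; abel

/-- Let `H_β` be the symmetric quiver Hecke algebra (over a field
`k` of characteristic `0`) and `M, N` simple modules over the completion `Ĥ`, at least
one of them real, and `a(z) ≠ b(z) ∈ zO` with `O = k[[z]]`.  Then the endomorphism
ring of the deformed convolution product `T = M_{a(z)} ⋆_O N_{b(z)}` satisfies
`End_{Ĥ_O}(T) = O·id`.

Encoding: `B` plays the role of `Ĥ_O = Ĥ ⊗ O` (an algebra over `O = k[[z]]`, so that
`O` is central in `B`), and `T` the deformed convolution product, an `O`-free,
`O`-finite `B`-module which is `z`-adically separated (`∩_n z^n T = 0`, hypothesis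
`hsep`); the submodule `ST = zT` is the image of multiplication by `z`; the hypothesis
`hEnd0` records that `End_{Ĥ}(T/zT) = End_{Ĥ}(M ⋆ N) = k·id`, which holds because `M`
and `N` are simple with one of them real and `a(z) ≠ b(z)`.  The conclusion is that
every `B`-linear endomorphism of `T` is multiplication by a power series. -/
theorem deformed_convolution_End_eq_O
    (k : Type) [Field k] [CharZero k]
    (B : Type) [Ring B] [Algebra (PowerSeries k) B]
    (T : Type) [AddCommGroup T] [Module B T]
    [Module (PowerSeries k) T] [IsScalarTower (PowerSeries k) B T]
    [Module.Free (PowerSeries k) T] [Module.Finite (PowerSeries k) T]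
    (ST : Submodule B T)
    (hST : ∀ x : T, x ∈ ST ↔ ∃ y : T, x = (PowerSeries.X : PowerSeries k) • y)
    (hsep : ∀ x : T,
      (∀ n : ℕ, ∃ y : T, x = ((PowerSeries.X : PowerSeries k) ^ n) • y) → x = 0)
    (hEnd0 : ∀ g : (T ⧸ ST) →ₗ[B] (T ⧸ ST), ∃ c : k,
      ∀ x : T, g (Submodule.Quotient.mk x)
        = Submodule.Quotient.mk ((PowerSeries.C c) • x)) :
    ∀ f : T →ₗ[B] T, ∃ c : PowerSeries k, ∀ x : T, f x = c • x := by
  intro f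
  -- X-multiplication is injective on the free module T
  have hinj : ∀ y y' : T, (PowerSeries.X : PowerSeries k) • y
      = (PowerSeries.X : PowerSeries k) • y' → y = y' := by
    intro y y' h
    exact smul_right_injective T PowerSeries.X_ne_zero h
  -- iterate the division step
  choose cfun hfun hspec using
    aux_step_divide k B T hinj ST hST hEnd0
  let g : ℕ → (T →ₗ[B] T) := fun n => Nat.rec f (fun _ prev => hfun prev) n
  let c : ℕ → k := fun n => cfun (g n)
  have hgsucc : ∀ n : ℕ, ∀ x : T, g n x
      = (PowerSeries.C (c n)) • x + (PowerSeries.X : PowerSeries k) • g (n + 1) x :=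
    fun n x => hspec (g n) x
  -- the partial sums
  have hmain : ∀ n : ℕ, ∀ x : T,
      f x = (∑ i ∈ Finset.range n,
          (PowerSeries.C (c i)) * (PowerSeries.X : PowerSeries k) ^ i) • x
        + ((PowerSeries.X : PowerSeries k) ^ n) • g n x := by
    intro n
    induction n with
    | zero => intro x; simp [g]
    | succ n ih =>
      intro x
      rw [ih x, hgsucc n x, Finset.sum_range_succ, smul_add, add_smul, smul_smul,
        smul_smul, mul_comm ((PowerSeries.X : PowerSeries k) ^ n), pow_succ]
      ring_nf
      abel
  -- the limit power series
  refine ⟨PowerSeries.mk c, fun x => ?_⟩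
  have hdvd : ∀ n : ℕ, ((PowerSeries.X : PowerSeries k) ^ n) ∣
      (PowerSeries.mk c - ∑ i ∈ Finset.range n,
        (PowerSeries.C (c i)) * (PowerSeries.X : PowerSeries k) ^ i) := by
    intro n
    rw [PowerSeries.X_pow_dvd_iff]
    intro m hm
    rw [map_sub, PowerSeries.coeff_mk, map_sum]
    have : ∀ i ∈ Finset.range n,
        (PowerSeries.coeff m) ((PowerSeries.C (c i))
          * (PowerSeries.X : PowerSeries k) ^ i)
        = if m = i then c i else 0 := by
      intro i _
      rw [PowerSeries.coeff_C_mul, PowerSeries.coeff_X_pow]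
      split <;> simp
    rw [Finset.sum_congr rfl this, Finset.sum_ite_eq, if_pos (Finset.mem_range.mpr hm),
      sub_self]
  have hzero : f x - (PowerSeries.mk c) • x = 0 := by
    apply hsep
    intro n
    obtain ⟨e, he⟩ := hdvd n
    refine ⟨g n x - e • x, ?_⟩
    have hc' : PowerSeries.mk c = (∑ i ∈ Finset.range n,
        (PowerSeries.C (c i)) * (PowerSeries.X : PowerSeries k) ^ i)
        + (PowerSeries.X : PowerSeries k) ^ n * e := by
      rw [← he]; ring
    rw [hmain n x, hc', add_smul, mul_smul, smul_sub]
    abel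
  have := sub_eq_zero.mp hzero
  exact this
end
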